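/- Let -1 ≤ β < α < 1 with α > 0, and set λ = (1-α)/(α-β). Let S be a spherical {α,β}-code in ℝ^d of size n and rank r, and let A be the adjacency matrix of the associated β-graph Γ_β(S). Then the matrix λI - A has at most one negative eigenvalue (equivalently, the second largest eigenvalue of Γ_β(S) is at most λ). Moreover: if λI - A is positive definite (all eigenvalues of Γ_β(S) are < λ) then n = r; and if λI - A is positive semidefinite but singular (the largest eigenvalue of Γ_β(S) equals λ) then rank(λI - A) = r - 1. -/

import Mathlib

open Matrix

noncomputable section

/-- The real inner product on `ℝ^d`. -/
def rinner {d : ℕ} (x y : EuclideanSpace ℝ (Fin d)) : ℝ := inner ℝ x y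

/-- A spherical `{α, β}`-code in `ℝ^d`: a family of unit vectors whose pairwise inner
products of distinct vectors lie in `{α, β}`. -/
def IsSphericalCode (α β : ℝ) {d n : ℕ} (u : Fin n → EuclideanSpace ℝ (Fin d)) : Prop :=
  (∀ i, ‖u i‖ = 1) ∧ ∀ i j, i ≠ j → rinner (u i) (u j) = α ∨ rinner (u i) (u j) = β

/-- Adjacency matrix of the associated `β`-graph `Γ_β(S)`. -/
def betaAdj (β : ℝ) {d n : ℕ} (u : Fin n → EuclideanSpace ℝ (Fin d)) :
    Matrix (Fin n) (Fin n) ℝ :=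
  Matrix.of fun i j => if i ≠ j ∧ rinner (u i) (u j) = β then 1 else 0

namespace Stmt10Aux
open Finset

variable {d n : ℕ}

def gram (u : Fin n → EuclideanSpace ℝ (Fin d)) : Matrix (Fin n) (Fin n) ℝ :=
  Matrix.of fun i j => rinner (u i) (u j)

lemma gram_eq (u : Fin n → EuclideanSpace ℝ (Fin d)) :
    gram u = (Matrix.of fun (k : Fin d) (i : Fin n) => u i k)ᵀ *
      (Matrix.of fun (k : Fin d) (i : Fin n) => u i k) := by
  ext i j
  simp [gram, rinner, Matrix.mul_apply, PiLp.inner_apply, RCLike.inner_apply, transpose_apply, mul_comm]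

lemma gram_posSemidef (u : Fin n → EuclideanSpace ℝ (Fin d)) : (gram u).PosSemidef := by
  rw [gram_eq]
  simpa using posSemidef_conjTranspose_mul_self (Matrix.of fun (k : Fin d) (i : Fin n) => u i k)

lemma gram_rank (u : Fin n → EuclideanSpace ℝ (Fin d)) :
    (gram u).rank = Module.finrank ℝ (Submodule.span ℝ (Set.range u)) := by
  rw [gram_eq, rank_transpose_mul_self, rank_eq_finrank_span_cols]
  have hmap : Submodule.span ℝ (Set.range (Matrix.of fun (k : Fin d) (i : Fin n) => u i k)ᵀ)
      = Submodule.map (EuclideanSpace.equiv (Fin d) ℝ).toLinearEquiv.toLinearMap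
          (Submodule.span ℝ (Set.range u)) := by
    rw [Submodule.map_span]
    congr 1
    rw [← Set.range_comp]
    rfl
  rw [show Set.range (Matrix.of fun (k : Fin d) (i : Fin n) => u i k).col =
      Set.range (Matrix.of fun (k : Fin d) (i : Fin n) => u i k)ᵀ from rfl, hmap]; exact LinearEquiv.finrank_map_eq _ _

/-- the sum-of-coordinates linear map -/
def sumLM : (Fin n → ℝ) →ₗ[ℝ] ℝ where
  toFun x := ∑ i, x i
  map_add' x y := by simp [Finset.sum_add_distrib]
  map_smul' c x := by simp [Finset.mul_sum]

@[simp] lemma sumLM_apply (x : Fin n → ℝ) : sumLM x = ∑ i, x i := rfl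

end Stmt10Aux

open Stmt10Aux

/-- for a spherical `{α,β}`-code with `α > 0`, `λ = (1-α)/(α-β)` and `A`
the adjacency matrix of the associated `β`-graph, the matrix `λI - A` has at most one
negative eigenvalue; if `λI - A` is positive definite then `n = r`; and if `λI - A` is
positive semidefinite and singular then `rank(λI - A) = r - 1`. -/
theorem stmt10 (d n : ℕ)
    (α β lam : ℝ) (hβ₁ : -1 ≤ β) (hβα : β < α) (hα : α < 1) (hα₀ : 0 < α)
    (hlam : lam = (1 - α) / (α - β))
    (u : Fin n → EuclideanSpace ℝ (Fin d)) (hu : IsSphericalCode α β u)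
    (r : ℕ) (hr : r = Module.finrank ℝ (Submodule.span ℝ (Set.range u)))
    (M : Matrix (Fin n) (Fin n) ℝ)
    (hM : M = lam • (1 : Matrix (Fin n) (Fin n) ℝ) - betaAdj β u)
    (hherm : M.IsHermitian) :
    (Finset.univ.filter fun i => hherm.eigenvalues i < 0).card ≤ 1 ∧
    (M.PosDef → n = r) ∧
    (M.PosSemidef → M.det = 0 → (M.rank : ℤ) = (r : ℤ) - 1) := by
  have hαβ : (0:ℝ) < α - β := by linarith
  set G := gram u with hG
  set J : Matrix (Fin n) (Fin n) ℝ := Matrix.of (fun _ _ => (1:ℝ)) with hJdef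
  -- key matrix identity
  have hkey : (α - β) • M = G - α • J := by
    ext i j
    by_cases hij : i = j
    · subst hij
      have h1 : rinner (u i) (u i) = 1 := by
        have := hu.1 i
        rw [rinner, real_inner_self_eq_norm_sq, this]; norm_num
      simp only [hM, hG, hJdef, Matrix.smul_apply, Matrix.sub_apply, Matrix.one_apply_eq,
        betaAdj, Matrix.of_apply, Stmt10Aux.gram, ne_eq, not_true_eq_false, false_and, if_false,
        smul_eq_mul, h1]
      rw [hlam]
      field_simp
      ring
    · have hod := hu.2 i j hij
      simp only [hM, hG, hJdef, Matrix.smul_apply, Matrix.sub_apply,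
        Matrix.one_apply_ne hij, betaAdj, Matrix.of_apply, Stmt10Aux.gram, smul_eq_mul]
      split_ifs with hcond
      · rw [hcond.2]; ring
      · have hia : rinner (u i) (u j) = α := by
          rcases hod with h | h
          · exact h
          · exact absurd ⟨hij, h⟩ hcond
        rw [hia]; ring
  -- quadratic form of J
  have hJq : ∀ x : Fin n → ℝ, x ⬝ᵥ J *ᵥ x = (∑ i, x i)^2 := by
    intro x
    simp only [hJdef, Matrix.mulVec, dotProduct, Matrix.of_apply, one_mul, sq]
    rw [← Finset.sum_mul]
  have hJv : ∀ x : Fin n → ℝ, (∑ i, x i) = 0 → J *ᵥ x = 0 := by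
    intro x hx
    funext i
    simpa [hJdef, Matrix.mulVec, dotProduct] using hx
  -- quadratic form identity
  have hq : ∀ x : Fin n → ℝ, (α - β) * (x ⬝ᵥ M *ᵥ x) = x ⬝ᵥ G *ᵥ x - α * (∑ i, x i)^2 := by
    intro x
    have := congrArg (fun N => x ⬝ᵥ N *ᵥ x) hkey
    simpa [smul_mulVec, sub_mulVec, dotProduct_smul, dotProduct_sub, smul_eq_mul,
      hJq x] using this
  have hGq : ∀ x : Fin n → ℝ, 0 ≤ x ⬝ᵥ G *ᵥ x := by
    intro x
    simpa using (gram_posSemidef u).dotProduct_mulVec_nonneg x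
  -- nonnegativity of q on the hyperplane
  have hnonneg : ∀ x : Fin n → ℝ, (∑ i, x i) = 0 → 0 ≤ x ⬝ᵥ M *ᵥ x := by
    intro x hx
    nlinarith [hq x, hGq x, hx]
  -- orthonormality facts
  have hvw : ∀ i j, (⇑(hherm.eigenvectorBasis i) : Fin n → ℝ) ⬝ᵥ ⇑(hherm.eigenvectorBasis j)
      = if i = j then 1 else 0 := by
    intro i j
    have h := orthonormal_iff_ite.mp (hherm.eigenvectorBasis).orthonormal i j
    simpa [PiLp.inner_apply, RCLike.inner_apply, dotProduct, mul_comm] using h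
  have hquad : ∀ (a b : ℝ) (i j : Fin n), i ≠ j →
      ((a • ⇑(hherm.eigenvectorBasis i) + b • ⇑(hherm.eigenvectorBasis j)) ⬝ᵥ
        M *ᵥ (a • ⇑(hherm.eigenvectorBasis i) + b • ⇑(hherm.eigenvectorBasis j)))
      = a^2 * hherm.eigenvalues i + b^2 * hherm.eigenvalues j := by
    intro a b i j hij
    have hi := hherm.mulVec_eigenvectorBasis i
    have hj := hherm.mulVec_eigenvectorBasis j
    have h1 : (⇑(hherm.eigenvectorBasis i) : Fin n → ℝ) ⬝ᵥ ⇑(hherm.eigenvectorBasis i) = 1 := by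
      rw [hvw]; simp
    have h2 : (⇑(hherm.eigenvectorBasis j) : Fin n → ℝ) ⬝ᵥ ⇑(hherm.eigenvectorBasis j) = 1 := by
      rw [hvw]; simp
    have h3 : (⇑(hherm.eigenvectorBasis i) : Fin n → ℝ) ⬝ᵥ ⇑(hherm.eigenvectorBasis j) = 0 := by
      rw [hvw]; simp [hij]
    have h4 : (⇑(hherm.eigenvectorBasis j) : Fin n → ℝ) ⬝ᵥ ⇑(hherm.eigenvectorBasis i) = 0 := by
      rw [hvw]; simp [Ne.symm hij]
    rw [mulVec_add, mulVec_smul, mulVec_smul, hi, hj]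
    rw [add_dotProduct, smul_dotProduct, smul_dotProduct]
    simp only [dotProduct_add, dotProduct_smul, smul_eq_mul, h1, h2, h3, h4]
    ring
  refine ⟨?_, ?_, ?_⟩
  · -- at most one negative eigenvalue
    rw [Finset.card_le_one]
    intro i hi j hj
    simp only [Finset.mem_filter, Finset.mem_univ, true_and] at hi hj
    by_contra hij
    set v : Fin n → ℝ := ⇑(hherm.eigenvectorBasis i) with hv
    set w : Fin n → ℝ := ⇑(hherm.eigenvectorBasis j) with hw
    have hqv : v ⬝ᵥ M *ᵥ v = hherm.eigenvalues i := by
      have := hquad 1 0 i j hij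
      simpa using this
    have hqw : w ⬝ᵥ M *ᵥ w = hherm.eigenvalues j := by
      have := hquad 0 1 i j hij
      simpa using this
    by_cases h1 : (∑ k, v k) = 0
    · have := hnonneg v h1
      rw [hqv] at this; linarith
    by_cases h2 : (∑ k, w k) = 0
    · have := hnonneg w h2
      rw [hqw] at this; linarith
    set x : Fin n → ℝ := (∑ k, w k) • v + (-(∑ k, v k)) • w with hx
    have hxs : (∑ k, x k) = 0 := by
      simp only [hx, Pi.add_apply, Pi.smul_apply, smul_eq_mul, Finset.sum_add_distrib,
        ← Finset.mul_sum]
      ring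
    have hqx := hquad (∑ k, w k) (-(∑ k, v k)) i j hij
    have := hnonneg x hxs
    rw [hx] at this
    rw [hqx] at this
    nlinarith [sq_nonneg (∑ k, w k), sq_nonneg (∑ k, v k), pow_pos (abs_pos.mpr h2) 2,
      sq_abs (∑ k, w k)]
  · -- positive definite case
    intro hpd
    have hGpd : G.PosDef := by
      refine Matrix.PosDef.of_dotProduct_mulVec_pos (gram_posSemidef u).isHermitian fun x hx => ?_
      have h1 : 0 < x ⬝ᵥ M *ᵥ x := by simpa using hpd.dotProduct_mulVec_pos hx
      have h2 := hq x
      simp only [star_trivial]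
      nlinarith [sq_nonneg (∑ i, x i)]
    have : G.rank = n := by
      have hunit : IsUnit G := by
        rw [Matrix.isUnit_iff_isUnit_det]
        exact (ne_of_gt hGpd.det_pos).isUnit
      simpa using Matrix.rank_of_isUnit G hunit
    rw [hr, ← gram_rank u, ← hG, this]
  · -- PSD singular case
    intro hpsd hdet
    obtain ⟨z, hz0, hzM⟩ := Matrix.exists_mulVec_eq_zero_iff.mpr hdet
    -- quadratic form via adjacency
    have hA0 : ∀ i j, 0 ≤ betaAdj β u i j := by
      intro i j
      simp only [betaAdj, Matrix.of_apply]
      split_ifs <;> norm_num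
    have hqM : ∀ x : Fin n → ℝ, x ⬝ᵥ M *ᵥ x = lam * (x ⬝ᵥ x) - x ⬝ᵥ (betaAdj β u *ᵥ x) := by
      intro x
      rw [hM]
      simp [sub_mulVec, smul_mulVec, dotProduct_sub, dotProduct_smul, smul_eq_mul]
    set w : Fin n → ℝ := fun k => |z k| with hwdef
    have hww : w ⬝ᵥ w = z ⬝ᵥ z := by
      simp only [dotProduct, hwdef, abs_mul_abs_self]
    have hAcomp : z ⬝ᵥ (betaAdj β u *ᵥ z) ≤ w ⬝ᵥ (betaAdj β u *ᵥ w) := by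
      simp only [dotProduct, Matrix.mulVec, Finset.mul_sum]
      refine Finset.sum_le_sum fun i _ => Finset.sum_le_sum fun j _ => ?_
      have : z i * (betaAdj β u i j * z j) ≤ |z i * (betaAdj β u i j * z j)| := le_abs_self _
      calc z i * (betaAdj β u i j * z j) ≤ |z i * (betaAdj β u i j * z j)| := le_abs_self _
        _ = |z i| * (betaAdj β u i j * |z j|) := by
            rw [abs_mul, abs_mul, abs_of_nonneg (hA0 i j)]
        _ = w i * (betaAdj β u i j * w j) := rfl
    have hqw0 : w ⬝ᵥ M *ᵥ w = 0 := by
      have h1 : w ⬝ᵥ M *ᵥ w ≤ z ⬝ᵥ M *ᵥ z := by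
        rw [hqM w, hqM z, hww]; linarith
      have h2 : z ⬝ᵥ M *ᵥ z = 0 := by rw [hzM, dotProduct_zero]
      have h3 : 0 ≤ w ⬝ᵥ M *ᵥ w := by simpa using hpsd.dotProduct_mulVec_nonneg w
      linarith
    have hwM : M *ᵥ w = 0 := by
      have := (hpsd.dotProduct_mulVec_zero_iff w).mp (by simpa using hqw0)
      exact this
    have hwsum : 0 < ∑ i, w i := by
      obtain ⟨k, hk⟩ := Function.ne_iff.mp hz0
      refine Finset.sum_pos' (fun i _ => abs_nonneg _) ⟨k, Finset.mem_univ k, abs_pos.mpr hk⟩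
    -- kernel relations
    have hMG : ∀ x : Fin n → ℝ, M *ᵥ x = 0 → (∑ i, x i) = 0 → G *ᵥ x = 0 := by
      intro x hx hs
      have := congrArg (fun N => N *ᵥ x) hkey
      simp only [smul_mulVec, sub_mulVec, hx, smul_zero] at this
      rw [hJv x hs, smul_zero, sub_zero] at this
      exact this.symm
    have hGM : ∀ x : Fin n → ℝ, G *ᵥ x = 0 → (∑ i, x i) = 0 ∧ M *ᵥ x = 0 := by
      intro x hx
      have hq1 := hq x
      rw [hx, dotProduct_zero] at hq1
      have hMx : 0 ≤ x ⬝ᵥ M *ᵥ x := by simpa using hpsd.dotProduct_mulVec_nonneg x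
      have hsq : (∑ i, x i)^2 = 0 := by
        refine le_antisymm ?_ (sq_nonneg _)
        nlinarith [mul_nonneg hαβ.le hMx]
      have hs : (∑ i, x i) = 0 := sq_eq_zero_iff.mp hsq
      have hq0 : x ⬝ᵥ M *ᵥ x = 0 := by
        have hmul : (α - β) * (x ⬝ᵥ M *ᵥ x) = 0 := by rw [hq1, hsq]; ring
        exact (mul_eq_zero.mp hmul).resolve_left (ne_of_gt hαβ)
      exact ⟨hs, (hpsd.dotProduct_mulVec_zero_iff x).mp (by simpa using hq0)⟩
    -- dimension count
    set KM := LinearMap.ker M.mulVecLin with hKM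
    set KG := LinearMap.ker G.mulVecLin with hKG
    have hle : KG ≤ KM := by
      intro x hx
      rw [hKG, LinearMap.mem_ker, mulVecLin_apply] at hx
      rw [hKM, LinearMap.mem_ker, mulVecLin_apply]
      exact (hGM x hx).2
    set f : KM →ₗ[ℝ] ℝ := sumLM.comp KM.subtype with hf
    have hfker : LinearMap.ker f = Submodule.comap KM.subtype KG := by
      ext ⟨x, hx⟩
      rw [hKM, LinearMap.mem_ker, mulVecLin_apply] at hx
      simp only [LinearMap.mem_ker, hf, LinearMap.comp_apply, Submodule.subtype_apply,
        sumLM_apply, Submodule.mem_comap, hKG, mulVecLin_apply]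
      constructor
      · intro h; exact hMG x hx h
      · intro h; exact (hGM x h).1
    have hfsurj : Function.Surjective f := by
      intro c
      have hwKM : w ∈ KM := by rw [hKM, LinearMap.mem_ker, mulVecLin_apply]; exact hwM
      refine ⟨(c / (∑ i, w i)) • ⟨w, hwKM⟩, ?_⟩
      simp only [hf, LinearMap.comp_apply, LinearMap.map_smul, Submodule.subtype_apply,
        sumLM_apply, smul_eq_mul]
      field_simp
    have hrange : LinearMap.range f = ⊤ := LinearMap.range_eq_top.mpr hfsurj
    have hdim1 : Module.finrank ℝ (LinearMap.range f) = 1 := by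
      rw [hrange]; simp
    have hdimker : Module.finrank ℝ (LinearMap.ker f) = Module.finrank ℝ KG := by
      rw [hfker]
      exact LinearEquiv.finrank_eq (Submodule.comapSubtypeEquivOfLe hle)
    have hrn1 := LinearMap.finrank_range_add_finrank_ker f
    have hrn2 := LinearMap.finrank_range_add_finrank_ker M.mulVecLin
    have hrn3 := LinearMap.finrank_range_add_finrank_ker G.mulVecLin
    rw [Module.finrank_fintype_fun_eq_card, Fintype.card_fin] at hrn2 hrn3
    have hGr : G.rank = r := by rw [hG, gram_rank u, hr]
    have hMrank : M.rank = Module.finrank ℝ (LinearMap.range M.mulVecLin) := rfl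
    have hGrank : G.rank = Module.finrank ℝ (LinearMap.range G.mulVecLin) := rfl
    have e1 : M.rank + Module.finrank ℝ KM = n := by rw [hMrank]; exact hrn2
    have e2 : G.rank + Module.finrank ℝ KG = n := by rw [hGrank]; exact hrn3
    have e3 : Module.finrank ℝ KM = 1 + Module.finrank ℝ KG := by
      rw [← hrn1, hdim1, hdimker]
    have : M.rank + 1 = r := by omega
    push_cast [← this]
    ring
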